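/- Let ι be a nonempty finite type, β a type, and K = ℓ²(ι × β, ℂ). Let B be a bounded linear operator on K. Then B is localized in the first factor if and only if for all states ρ and ρ' on K with ρ|₀ = ρ'|₀, one has Tr(Bρ) = Tr(Bρ'). -/

import Mathlib

open scoped ComplexConjugate
open Classical
open scoped ENNReal

noncomputable section

variable {ι β : Type}

/-- The Hilbert space `ℓ²(ι × β, ℂ)`. -/
abbrev K (ι β : Type) : Type := lp (fun _ : ι × β => ℂ) 2

/-- Canonical basis vector. -/
def e (u : ι) (v : β) : K ι β := lp.single 2 (u, v) 1

/-- `B` is localized in the first factor. -/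
def LocalizedFst (B : K ι β →L[ℂ] K ι β) : Prop :=
  ∃ b : ι → ι → ℂ, ∀ (u u' : ι) (v v' : β),
    (inner ℂ (e u v) (B (e u' v')) : ℂ) = if v = v' then b u u' else 0

/-- A state: countable convex combination of an orthonormal family of pure states. -/
structure State (H : Type) [NormedAddCommGroup H] [InnerProductSpace ℂ H] where
  ψ : ℕ → H
  p : ℕ → ℝ
  nonneg : ∀ k, 0 ≤ p k
  sum_one : HasSum p 1
  ortho : ∀ j k, p j ≠ 0 → p k ≠ 0 → (inner ℂ (ψ j) (ψ k) : ℂ) = if j = k then 1 else 0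

/-- Reduction of a state to the first factor. -/
def red0 (ρ : State (K ι β)) : ι → ι → ℂ := fun u u' =>
  ∑' k, (ρ.p k : ℂ) * ∑' v : β, (ρ.ψ k) (u, v) * conj ((ρ.ψ k) (u', v))

/-- `Tr(Bρ)`. -/
def trB (B : K ι β →L[ℂ] K ι β) (ρ : State (K ι β)) : ℂ :=
  ∑' k, (ρ.p k : ℂ) * (inner ℂ (ρ.ψ k) (B (ρ.ψ k)) : ℂ)

lemma inner_K (f g : K ι β) : (inner ℂ f g : ℂ) = ∑' x : ι × β, conj (f x) * g x := by
  rw [lp.inner_eq_tsum]; simp only [RCLike.inner_apply']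

lemma summable_K (f g : K ι β) : Summable fun x : ι × β => conj (f x) * g x := by
  have := lp.summable_inner (𝕜 := ℂ) f g
  simpa [RCLike.inner_apply, mul_comm] using this

lemma normsq_summable (f : K ι β) : Summable fun x : ι × β => ‖f x‖ ^ 2 := by
  have h := (lp.memℓp f).summable (p := 2) (by norm_num)
  have : ∀ x : ι × β, ‖f x‖ ^ ((2:ℝ≥0∞).toReal) = ‖f x‖ ^ 2 := by
    intro x
    rw [show (2:ℝ≥0∞).toReal = ((2:ℕ):ℝ) by norm_num, Real.rpow_natCast]
  simpa only [this] using h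

lemma normsq_fiber_summable (f : K ι β) (u : ι) : Summable fun v : β => ‖f (u, v)‖ ^ 2 :=
  (normsq_summable f).comp_injective (fun a b h => by simpa using h)

lemma summable_mul_of_sq {f g : β → ℂ} (hf : Summable fun v => ‖f v‖ ^ 2)
    (hg : Summable fun v => ‖g v‖ ^ 2) : Summable fun v => f v * g v := by
  apply Summable.of_norm
  refine Summable.of_nonneg_of_le (fun v => norm_nonneg _) (fun v => ?_)
    ((hf.add hg).div_const 2)
  rw [norm_mul]
  nlinarith [norm_nonneg (f v), norm_nonneg (g v), sq_nonneg (‖f v‖ - ‖g v‖)]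

lemma summable_fiber_mul_conj (f g : K ι β) (u w : ι) :
    Summable fun v : β => f (u, v) * conj (g (w, v)) :=
  summable_mul_of_sq (normsq_fiber_summable f u) (by simpa using normsq_fiber_summable g w)

lemma summable_conj_fiber_mul (f g : K ι β) (u w : ι) :
    Summable fun v : β => conj (f (u, v)) * g (w, v) :=
  summable_mul_of_sq (by simpa using normsq_fiber_summable f u) (normsq_fiber_summable g w)

lemma total_normsq_eq_one (f : K ι β) (hf : (inner ℂ f f : ℂ) = 1) :
    ∑' x : ι × β, ‖f x‖ ^ 2 = 1 := by
  have h1 : (inner ℂ f f : ℂ) = ∑' x : ι × β, ((‖f x‖ ^ 2 : ℝ) : ℂ) := by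
    rw [inner_K]
    congr 1; funext x
    rw [RCLike.conj_mul]; norm_cast
  rw [hf, ← Complex.ofReal_tsum] at h1
  exact_mod_cast h1.symm

lemma fiber_normsq_le_one (f : K ι β) (hf : (inner ℂ f f : ℂ) = 1) (u : ι) :
    ∑' v : β, ‖f (u, v)‖ ^ 2 ≤ 1 := by
  rw [← total_normsq_eq_one f hf]
  exact Summable.tsum_le_tsum_of_inj (fun v => ((u, v) : ι × β)) (fun a b h => by simpa using h)
    (fun x _ => sq_nonneg _) (fun v => le_refl _) (normsq_fiber_summable f u)
    (normsq_summable f)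

lemma norm_S_le_one (f : K ι β) (hf : (inner ℂ f f : ℂ) = 1) (u w : ι) :
    ‖∑' v : β, f (u, v) * conj (f (w, v))‖ ≤ 1 := by
  have hb : ∀ v : β, ‖f (u, v) * conj (f (w, v))‖ ≤ (‖f (u,v)‖^2 + ‖f (w,v)‖^2) / 2 := by
    intro v
    rw [norm_mul, RCLike.norm_conj]
    nlinarith [norm_nonneg (f (u,v)), norm_nonneg (f (w,v)), sq_nonneg (‖f (u,v)‖ - ‖f (w,v)‖)]
  have hsum : Summable fun v : β => (‖f (u,v)‖^2 + ‖f (w,v)‖^2) / 2 :=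
    ((normsq_fiber_summable f u).add (normsq_fiber_summable f w)).div_const 2
  have hnorms : Summable fun v : β => ‖f (u, v) * conj (f (w, v))‖ :=
    Summable.of_nonneg_of_le (fun v => norm_nonneg _) hb hsum
  calc ‖∑' v : β, f (u, v) * conj (f (w, v))‖ ≤ ∑' v, ‖f (u, v) * conj (f (w, v))‖ :=
        norm_tsum_le_tsum_norm hnorms
    _ ≤ ∑' v, (‖f (u,v)‖^2 + ‖f (w,v)‖^2) / 2 := Summable.tsum_le_tsum hb hnorms hsum
    _ = (∑' v, ‖f (u,v)‖^2) / 2 + (∑' v, ‖f (w,v)‖^2) / 2 := by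
        rw [← tsum_div_const, ← tsum_div_const, ← Summable.tsum_add
          ((normsq_fiber_summable f u).div_const 2) ((normsq_fiber_summable f w).div_const 2)]
        congr 1; funext v; ring
    _ ≤ 1/2 + 1/2 := by
        gcongr
        · exact fiber_normsq_le_one f hf u
        · exact fiber_normsq_le_one f hf w
    _ = 1 := by norm_num


def pureState (φ : K ι β) (h : (inner ℂ φ φ : ℂ) = 1) : State (K ι β) where
  ψ := fun k => if k = 0 then φ else 0
  p := fun k => if k = 0 then 1 else 0
  nonneg := by intro k; split <;> norm_num
  sum_one := hasSum_ite_eq 0 1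
  ortho := by
    intro j k hj hk
    have hj0 : j = 0 := by by_contra h'; simp [h'] at hj
    have hk0 : k = 0 := by by_contra h'; simp [h'] at hk
    subst hj0; subst hk0; simpa using h

lemma red0_pure (φ : K ι β) (h : (inner ℂ φ φ : ℂ) = 1) (u u' : ι) :
    red0 (pureState φ h) u u' = ∑' v : β, φ (u, v) * conj (φ (u', v)) := by
  unfold red0 pureState
  rw [tsum_eq_single 0]
  · simp
  · intro k hk; simp [hk]

lemma trB_pure (B : K ι β →L[ℂ] K ι β) (φ : K ι β) (h : (inner ℂ φ φ : ℂ) = 1) :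
    trB B (pureState φ h) = (inner ℂ φ (B φ) : ℂ) := by
  unfold trB pureState
  rw [tsum_eq_single 0]
  · simp
  · intro k hk; simp [hk]

lemma e_apply (u : ι) (v : β) (x : ι × β) : (e u v : K ι β) x = if x = (u,v) then 1 else 0 := by
  rw [e, lp.single_apply]; split_ifs with h
  · subst h; simp
  · simp [h]

lemma inner_e_left (u : ι) (v : β) (f : K ι β) : (inner ℂ (e u v) f : ℂ) = f (u, v) := by
  rw [e, lp.inner_single_left]
  simp [RCLike.inner_apply]

lemma inner_e_e (u u' : ι) (v v' : β) :
    (inner ℂ (e u v) (e u' v' : K ι β) : ℂ) = if (u, v) = (u', v') then 1 else 0 := by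
  rw [inner_e_left, e_apply]

lemma key {B : K ι β →L[ℂ] K ι β}
    (hyp : ∀ ρ ρ' : State (K ι β), red0 ρ = red0 ρ' → trB B ρ = trB B ρ')
    (φ φ' : K ι β) (h : (inner ℂ φ φ : ℂ) = 1) (h' : (inner ℂ φ' φ' : ℂ) = 1)
    (hS : ∀ u u' : ι, (∑' v : β, φ (u, v) * conj (φ (u', v)))
      = ∑' v : β, φ' (u, v) * conj (φ' (u', v))) :
    (inner ℂ φ (B φ) : ℂ) = inner ℂ φ' (B φ') := by
  rw [← trB_pure B φ h, ← trB_pure B φ' h']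
  apply hyp
  funext u u'
  rw [red0_pure, red0_pure]
  exact hS u u'

section TwoVec

variable (u u' : ι) (v v' : β) (a c : ℂ)

def tv : K ι β := a • e u v + c • e u' v'

lemma tv_apply (x : ι × β) :
    (tv u u' v v' a c : K ι β) x
      = a * (if x = (u,v) then 1 else 0) + c * (if x = (u',v') then 1 else 0) := by
  unfold tv
  rw [lp.coeFn_add, Pi.add_apply, lp.coeFn_smul, Pi.smul_apply, lp.coeFn_smul, Pi.smul_apply,
    e_apply, e_apply]
  simp [smul_eq_mul]

lemma inner_tv_tv (hne : (u,v) ≠ (u',v')) :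
    (inner ℂ (tv u u' v v' a c : K ι β) (tv u u' v v' a c) : ℂ) = conj a * a + conj c * c := by
  unfold tv
  rw [inner_add_left, inner_add_right, inner_add_right]
  rw [inner_smul_left, inner_smul_left, inner_smul_left, inner_smul_left,
    inner_smul_right, inner_smul_right, inner_smul_right, inner_smul_right]
  rw [inner_e_e, inner_e_e, inner_e_e, inner_e_e]
  simp [hne, hne.symm]

lemma inner_tv_B_tv (B : K ι β →L[ℂ] K ι β) :
    (inner ℂ (tv u u' v v' a c : K ι β) (B (tv u u' v v' a c)) : ℂ)
      = conj a * a * inner ℂ (e u v) (B (e u v))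
      + conj a * c * inner ℂ (e u v) (B (e u' v'))
      + conj c * a * inner ℂ (e u' v') (B (e u v))
      + conj c * c * inner ℂ (e u' v') (B (e u' v')) := by
  unfold tv
  rw [map_add, map_smul, map_smul]
  rw [inner_add_left, inner_add_right, inner_add_right]
  rw [inner_smul_left, inner_smul_left, inner_smul_left, inner_smul_left,
    inner_smul_right, inner_smul_right, inner_smul_right, inner_smul_right]
  ring

end TwoVec

lemma conj_ite01 (P : Prop) [Decidable P] : conj (if P then (1:ℂ) else 0) = if P then 1 else 0 := by
  split_ifs <;> simp

lemma S_e (u : ι) (v : β) (x x' : ι) :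
    (∑' y : β, (e u v : K ι β) (x, y) * conj ((e u v : K ι β) (x', y)))
      = (if x = u then 1 else 0) * (if x' = u then 1 else 0) := by
  rw [tsum_eq_single v]
  · simp only [e_apply, Prod.mk.injEq, conj_ite01]
    by_cases h1 : x = u <;> by_cases h2 : x' = u <;> simp [h1, h2]
  · intro y hy
    simp [e_apply, Prod.mk.injEq, hy]

lemma S_tv_same (u u' : ι) (v : β) (a c : ℂ) (x x' : ι) :
    (∑' y : β, (tv u u' v v a c : K ι β) (x, y) * conj ((tv u u' v v a c : K ι β) (x', y)))
      = (a * (if x = u then 1 else 0) + c * (if x = u' then 1 else 0))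
        * (conj a * (if x' = u then 1 else 0) + conj c * (if x' = u' then 1 else 0)) := by
  rw [tsum_eq_single v]
  · rw [tv_apply, tv_apply]
    simp only [Prod.mk.injEq, and_true, map_add, map_mul, conj_ite01]
  · intro y hy
    rw [tv_apply, tv_apply]
    simp [Prod.mk.injEq, hy]

lemma S_tv_diff (u u' : ι) (v v' : β) (hv : v ≠ v') (a c : ℂ) (x x' : ι) :
    (∑' y : β, (tv u u' v v' a c : K ι β) (x, y) * conj ((tv u u' v v' a c : K ι β) (x', y)))
      = a * conj a * ((if x = u then 1 else 0) * (if x' = u then 1 else 0))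
      + c * conj c * ((if x = u' then 1 else 0) * (if x' = u' then 1 else 0)) := by
  rw [tsum_eq_sum (s := {v, v'}) ?_]
  · rw [Finset.sum_insert (by simp [hv]), Finset.sum_singleton]
    rw [tv_apply, tv_apply, tv_apply, tv_apply]
    simp only [Prod.mk.injEq, and_true, hv, hv.symm, and_false, if_false, mul_zero, add_zero,
      zero_add, map_mul, conj_ite01]
    ring
  · intro y hy
    simp only [Finset.mem_insert, Finset.mem_singleton, not_or] at hy
    rw [tv_apply, tv_apply]
    simp [Prod.mk.injEq, hy.1, hy.2]

section Backward

variable {B : K ι β →L[ℂ] K ι β}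

lemma trace_tv (B : K ι β →L[ℂ] K ι β) (u u' : ι) (v v' : β) {r ε : ℂ}
    (hr : conj r = r) (hr2 : r * r = 1/2) (hε : conj ε * ε = 1) :
    (inner ℂ (tv u u' v v' r (ε*r) : K ι β) (B (tv u u' v v' r (ε*r))) : ℂ)
      = (1/2) * ((inner ℂ (e u v) (B (e u v)) : ℂ) + ε * inner ℂ (e u v) (B (e u' v'))
        + conj ε * inner ℂ (e u' v') (B (e u v)) + inner ℂ (e u' v') (B (e u' v'))) := by
  rw [inner_tv_B_tv]
  rw [map_mul, hr]
  set A := (inner ℂ (e u v) (B (e u v)) : ℂ)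
  set X := (inner ℂ (e u v) (B (e u' v')) : ℂ)
  set Y := (inner ℂ (e u' v') (B (e u v)) : ℂ)
  set A' := (inner ℂ (e u' v') (B (e u' v')) : ℂ)
  linear_combination (A + ε * X + conj ε * Y + conj ε * ε * A') * hr2 + (1/2 : ℂ) * A' * hε

lemma norm_tv (u u' : ι) (v v' : β) {r ε : ℂ}
    (hr : conj r = r) (hr2 : r * r = 1/2) (hε : conj ε * ε = 1)
    (hne : (u,v) ≠ (u',v')) :
    (inner ℂ (tv u u' v v' r (ε*r) : K ι β) (tv u u' v v' r (ε*r)) : ℂ) = 1 := by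
  rw [inner_tv_tv _ _ _ _ _ _ hne]
  rw [map_mul, hr]
  linear_combination (1 + conj ε * ε) * hr2 + (1/2 : ℂ) * hε

lemma backward (hyp : ∀ ρ ρ' : State (K ι β), red0 ρ = red0 ρ' → trB B ρ = trB B ρ') :
    ∃ b : ι → ι → ℂ, ∀ (u u' : ι) (v v' : β),
      (inner ℂ (e u v) (B (e u' v')) : ℂ) = if v = v' then b u u' else 0 := by
  by_cases hβ : Nonempty β
  case neg =>
    exact ⟨0, fun u u' v v' => absurd ⟨v⟩ hβ⟩
  case pos =>
  obtain ⟨v₀⟩ := hβ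
  set r : ℂ := (Real.sqrt 2 : ℂ)⁻¹ with hrdef
  have hr : conj r = r := by simp [hrdef, map_inv₀, Complex.conj_ofReal]
  have hr2 : r * r = 1/2 := by
    rw [hrdef, ← mul_inv]
    norm_cast
    rw [Real.mul_self_sqrt (by norm_num)]
    norm_num
  have hone : conj (1:ℂ) * 1 = 1 := by simp
  have hmone : conj (-1:ℂ) * (-1) = 1 := by simp
  have hI : conj Complex.I * Complex.I = 1 := by simp [Complex.conj_I]
  have hmI : conj (-Complex.I) * (-Complex.I) = 1 := by simp [Complex.conj_I]
  -- diagonal (u = u') case: matrix element independent of v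
  have hpure : ∀ (u : ι) (v : β), (inner ℂ (e u v : K ι β) (e u v) : ℂ) = 1 := by
    intro u v; rw [inner_e_e]; simp
  have hdiag_pure : ∀ (u : ι) (v v₁ : β),
      (inner ℂ (e u v) (B (e u v)) : ℂ) = inner ℂ (e u v₁) (B (e u v₁)) := by
    intro u v v₁
    refine key hyp _ _ (hpure u v) (hpure u v₁) fun x x' => ?_
    rw [S_e, S_e]
  -- same-v case
  have hdiag : ∀ (u u' : ι) (v v₁ : β),
      (inner ℂ (e u v) (B (e u' v)) : ℂ) = inner ℂ (e u v₁) (B (e u' v₁)) := by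
    intro u u' v v₁
    by_cases huu : u = u'
    · subst huu; exact hdiag_pure u v v₁
    · have hne : ∀ w : β, ((u,w) : ι × β) ≠ (u', w) := fun w h => huu (congrArg Prod.fst h)
      have key1 : ∀ ε : ℂ, conj ε * ε = 1 →
          (inner ℂ (tv u u' v v r (ε*r) : K ι β) (B (tv u u' v v r (ε*r))) : ℂ)
            = inner ℂ (tv u u' v₁ v₁ r (ε*r) : K ι β) (B (tv u u' v₁ v₁ r (ε*r))) := by
        intro ε hε
        refine key hyp _ _ (norm_tv u u' v v hr hr2 hε (hne v))
          (norm_tv u u' v₁ v₁ hr hr2 hε (hne v₁)) fun x x' => ?_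
        rw [S_tv_same, S_tv_same]
      have eq1 := key1 1 hone
      have eqI := key1 Complex.I hI
      rw [trace_tv B u u' v v hr hr2 hone, trace_tv B u u' v₁ v₁ hr hr2 hone] at eq1
      rw [trace_tv B u u' v v hr hr2 hI, trace_tv B u u' v₁ v₁ hr hr2 hI] at eqI
      simp only [map_one, Complex.conj_I] at eq1 eqI
      have hD := hdiag_pure u v v₁
      have hD' := hdiag_pure u' v v₁
      set X := (inner ℂ (e u v) (B (e u' v)) : ℂ)
      set X₁ := (inner ℂ (e u v₁) (B (e u' v₁)) : ℂ)
      set Y := (inner ℂ (e u' v) (B (e u v)) : ℂ)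
      set Y₁ := (inner ℂ (e u' v₁) (B (e u v₁)) : ℂ)
      linear_combination eq1 - Complex.I * eqI - (1/2 - Complex.I/2) * hD
        - (1/2 - Complex.I/2) * hD' + (1/2 : ℂ) * (X - X₁ + Y₁ - Y) * Complex.I_sq
  -- off-diagonal in v: zero
  have hoff : ∀ (u u' : ι) (v v' : β), v ≠ v' →
      (inner ℂ (e u v) (B (e u' v')) : ℂ) = 0 := by
    intro u u' v v' hv
    have hne : ((u,v) : ι × β) ≠ (u', v') := fun h => hv (congrArg Prod.snd h)
    have key1 : ∀ ε ε' : ℂ, conj ε * ε = 1 → conj ε' * ε' = 1 →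
        (inner ℂ (tv u u' v v' r (ε*r) : K ι β) (B (tv u u' v v' r (ε*r))) : ℂ)
          = inner ℂ (tv u u' v v' r (ε'*r) : K ι β) (B (tv u u' v v' r (ε'*r))) := by
      intro ε ε' hε hε'
      refine key hyp _ _ (norm_tv u u' v v' hr hr2 hε hne)
        (norm_tv u u' v v' hr hr2 hε' hne) fun x x' => ?_
      rw [S_tv_diff u u' v v' hv, S_tv_diff u u' v v' hv]
      have h1 : ε * r * conj (ε * r) = ε' * r * conj (ε' * r) := by
        rw [map_mul, map_mul, hr]
        linear_combination r * r * hε - r * r * hε'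
      rw [h1]
    have e1m := key1 1 (-1) hone hmone
    have eIm := key1 Complex.I (-Complex.I) hI hmI
    rw [trace_tv B u u' v v' hr hr2 hone, trace_tv B u u' v v' hr hr2 hmone] at e1m
    rw [trace_tv B u u' v v' hr hr2 hI, trace_tv B u u' v v' hr hr2 hmI] at eIm
    simp only [map_one, map_neg, Complex.conj_I] at e1m eIm
    set X := (inner ℂ (e u v) (B (e u' v')) : ℂ)
    set Y := (inner ℂ (e u' v') (B (e u v)) : ℂ)
    linear_combination (1/2 : ℂ) * e1m - (Complex.I/2) * eIm
      + (1/2 : ℂ) * (X - Y) * Complex.I_sq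
  refine ⟨fun u u' => inner ℂ (e u v₀) (B (e u' v₀)), fun u u' v v' => ?_⟩
  by_cases hvv : v = v'
  · subst hvv
    simp only [if_pos rfl]
    exact hdiag u u' v v₀
  · rw [if_neg hvv]
    exact hoff u u' v v' hvv

end Backward

section Forward

variable [Fintype ι] {B : K ι β →L[ℂ] K ι β} {b : ι → ι → ℂ}
  (hb : ∀ (u u' : ι) (v v' : β),
    (inner ℂ (e u v) (B (e u' v')) : ℂ) = if v = v' then b u u' else 0)

include hb

lemma F1 (ψ : K ι β) (u : ι) (v : β) :
    (B ψ) (u, v) = ∑ w : ι, b u w * ψ (w, v) := by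
  have h0 : ((B ψ) (u, v) : ℂ) = inner ℂ (e u v) (B ψ) := (inner_e_left u v (B ψ)).symm
  rw [h0, ← ContinuousLinearMap.adjoint_inner_left B ψ (e u v), inner_K]
  have hcoef : ∀ x : ι × β,
      conj (((ContinuousLinearMap.adjoint B) (e u v)) x) = if v = x.2 then b u x.1 else 0 := by
    intro x
    have h1 : (((ContinuousLinearMap.adjoint B) (e u v)) x : ℂ)
        = inner ℂ (e x.1 x.2) ((ContinuousLinearMap.adjoint B) (e u v)) := by
      rw [inner_e_left]
    rw [h1, ← inner_conj_symm, ContinuousLinearMap.adjoint_inner_left, Complex.conj_conj, hb]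
  calc (∑' x : ι × β, conj (((ContinuousLinearMap.adjoint B) (e u v)) x) * ψ x)
      = ∑' x : ι × β, (if v = x.2 then b u x.1 else 0) * ψ x := by
        congr 1; funext x; rw [hcoef]
    _ = ∑ x ∈ Finset.univ.image (fun w : ι => ((w, v) : ι × β)),
          (if v = x.2 then b u x.1 else 0) * ψ x := by
        apply tsum_eq_sum
        intro x hx
        have : v ≠ x.2 := by
          intro h
          exact hx (Finset.mem_image.2 ⟨x.1, Finset.mem_univ _, by rw [h]⟩)
        rw [if_neg this, zero_mul]
    _ = ∑ w : ι, b u w * ψ (w, v) := by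
        rw [Finset.sum_image (by intro a _ b _ h; simpa using h)]
        simp

lemma F2 (ψ : K ι β) :
    (inner ℂ ψ (B ψ) : ℂ)
      = ∑ x : ι × ι, b x.1 x.2 * ∑' v : β, conj (ψ (x.1, v)) * ψ (x.2, v) := by
  rw [inner_K]
  have hsum : Summable fun x : ι × β => conj (ψ x) * (B ψ) x := summable_K ψ (B ψ)
  rw [Summable.tsum_prod' hsum (fun u => hsum.comp_injective (fun a c h => by simpa using h)),
    tsum_fintype, Fintype.sum_prod_type]
  apply Finset.sum_congr rfl
  intro u _
  have hstep : ∀ v : β, conj (ψ (u, v)) * (B ψ) (u, v)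
      = ∑ w : ι, b u w * (conj (ψ (u, v)) * ψ (w, v)) := by
    intro v
    rw [F1 hb, Finset.mul_sum]
    congr 1; funext w; ring
  calc (∑' v : β, conj (ψ (u, v)) * (B ψ) (u, v))
      = ∑' v : β, ∑ w : ι, b u w * (conj (ψ (u, v)) * ψ (w, v)) := by
        congr 1; funext v; rw [hstep]
    _ = ∑ w : ι, ∑' v : β, b u w * (conj (ψ (u, v)) * ψ (w, v)) := by
        apply Summable.tsum_finsetSum
        intro w _
        exact (summable_conj_fiber_mul ψ ψ u w).mul_left _
    _ = ∑ w : ι, b u w * ∑' v : β, conj (ψ (u, v)) * ψ (w, v) := by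
        apply Finset.sum_congr rfl
        intro w _
        rw [tsum_mul_left]

lemma F3 (ρ : State (K ι β)) :
    trB B ρ = ∑ x : ι × ι, b x.1 x.2 * conj (red0 ρ x.1 x.2) := by
  have hconjS : ∀ (k : ℕ) (u w : ι),
      (∑' v : β, conj ((ρ.ψ k) (u, v)) * (ρ.ψ k) (w, v))
        = conj (∑' v : β, (ρ.ψ k) (u, v) * conj ((ρ.ψ k) (w, v))) := by
    intro k u w
    rw [starRingEnd_apply, tsum_star]
    congr 1; funext v
    simp only [star_mul', Complex.star_def, Complex.conj_conj]
  have hstep : ∀ k, (ρ.p k : ℂ) * (inner ℂ (ρ.ψ k) (B (ρ.ψ k)) : ℂ)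
      = ∑ x : ι × ι, (ρ.p k : ℂ)
          * (b x.1 x.2 * conj (∑' v : β, (ρ.ψ k) (x.1, v) * conj ((ρ.ψ k) (x.2, v)))) := by
    intro k
    rw [F2 hb, Finset.mul_sum]
    apply Finset.sum_congr rfl
    intro x _
    rw [hconjS]
  have hsumm : ∀ x : ι × ι, Summable fun k => (ρ.p k : ℂ)
      * (b x.1 x.2 * conj (∑' v : β, (ρ.ψ k) (x.1, v) * conj ((ρ.ψ k) (x.2, v)))) := by
    intro x
    apply Summable.of_norm_bounded (g := fun k => ‖b x.1 x.2‖ * ρ.p k)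
      ((ρ.sum_one.summable.mul_left _))
    intro k
    by_cases hk : ρ.p k = 0
    · simp [hk]
    · have hψ : (inner ℂ (ρ.ψ k) (ρ.ψ k) : ℂ) = 1 := by
        have := ρ.ortho k k hk hk; simpa using this
      have hS := norm_S_le_one (ρ.ψ k) hψ x.1 x.2
      rw [norm_mul, norm_mul, RCLike.norm_conj, Complex.norm_real,
        Real.norm_of_nonneg (ρ.nonneg k)]
      have hbn : (0:ℝ) ≤ ‖b x.1 x.2‖ := norm_nonneg _
      have hpn := ρ.nonneg k
      nlinarith [mul_le_mul_of_nonneg_left hS (mul_nonneg hpn hbn)]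
  calc trB B ρ = ∑' k, ∑ x : ι × ι, (ρ.p k : ℂ)
        * (b x.1 x.2 * conj (∑' v : β, (ρ.ψ k) (x.1, v) * conj ((ρ.ψ k) (x.2, v)))) := by
        unfold trB; congr 1; funext k; rw [hstep]
    _ = ∑ x : ι × ι, ∑' k, (ρ.p k : ℂ)
        * (b x.1 x.2 * conj (∑' v : β, (ρ.ψ k) (x.1, v) * conj ((ρ.ψ k) (x.2, v)))) :=
        Summable.tsum_finsetSum (fun x _ => hsumm x)
    _ = ∑ x : ι × ι, b x.1 x.2 * conj (red0 ρ x.1 x.2) := by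
        apply Finset.sum_congr rfl
        intro x _
        have h1 : ∀ k, (ρ.p k : ℂ)
            * (b x.1 x.2 * conj (∑' v : β, (ρ.ψ k) (x.1, v) * conj ((ρ.ψ k) (x.2, v))))
            = b x.1 x.2 * ((ρ.p k : ℂ)
              * conj (∑' v : β, (ρ.ψ k) (x.1, v) * conj ((ρ.ψ k) (x.2, v)))) := by
          intro k; ring
        simp only [h1]
        rw [tsum_mul_left]
        congr 1
        unfold red0
        rw [starRingEnd_apply, tsum_star]
        congr 1; funext k
        simp only [star_mul', Complex.star_def, Complex.conj_conj, Complex.conj_ofReal]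

end Forward


/-- `B` is localized in the first factor iff `Tr(Bρ)` only depends on the
reduction of `ρ` to the first factor. -/
theorem localizedFst_iff_trace_depends_on_red0
    {ι β : Type} [Fintype ι] [Nonempty ι] (B : K ι β →L[ℂ] K ι β) :
    LocalizedFst B ↔
      ∀ ρ ρ' : State (K ι β), red0 ρ = red0 ρ' → trB B ρ = trB B ρ' := by
  constructor
  · rintro ⟨b, hb⟩ ρ ρ' h
    rw [F3 hb ρ, F3 hb ρ', h]
  · intro hyp
    exact backward hyp

end
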